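/- For odd N ≥ 3 and every n ∈ ℕ, the Bernoulli polynomial B_{2n} satisfies the eigenvalue relation of the multi-tent map of slope ±N: N^{2n−1}·[B_{2n}(y/N) + B_{2n}((2−y)/N) + B_{2n}((2+y)/N) + ... + B_{2n}((y + N − 1)/N)] = B_{2n}(y) for all y ∈ [0,1], where the arguments range over the N preimages y/N, (2−y)/N, (2+y)/N, (4−y)/N, ..., ((N−1)+y)/N. -/

import Mathlib

open Polynomial PowerSeries

noncomputable def BGF (t : ℚ) : PowerSeries ℚ :=
  PowerSeries.mk fun n => Polynomial.aeval t ((1 / (n.factorial : ℚ)) • Polynomial.bernoulli n)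

lemma mt_series (N : ℕ) (hN : 0 < N) (t : ℚ) :
    ∑ k ∈ Finset.range N, BGF ((t + k) / N) =
      PowerSeries.C (N : ℚ) * PowerSeries.rescale ((N : ℚ)⁻¹) (BGF t) := by
  have hN0 : (N : ℚ) ≠ 0 := Nat.cast_ne_zero.mpr hN.ne'
  set E : PowerSeries ℚ := rescale ((N : ℚ)⁻¹) (exp ℚ) with hE
  have hEk : ∀ k : ℕ, E ^ k = rescale ((k : ℚ) / N) (exp ℚ) := by
    intro k
    rw [hE, ← map_pow, exp_pow_eq_rescale_exp, rescale_rescale, div_eq_mul_inv]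
  have hexp1 : exp ℚ - 1 ≠ 0 := by
    intro h
    have := congrArg (PowerSeries.coeff 1) h
    simp [coeff_exp] at this
  have hE1 : E - 1 ≠ 0 := by
    intro h
    have := congrArg (PowerSeries.coeff 1) h
    simp [hE, coeff_rescale, coeff_exp, hN0] at this
  have hc : (exp ℚ - 1) * (E - 1) ≠ 0 := mul_ne_zero hexp1 hE1
  apply mul_right_cancel₀ hc
  have hgen : ∀ s : ℚ, BGF s * (exp ℚ - 1) = PowerSeries.X * rescale s (exp ℚ) := fun s => by
    unfold BGF; exact Polynomial.bernoulli_generating_function s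
  calc (∑ k ∈ Finset.range N, BGF ((t + k) / N)) * ((exp ℚ - 1) * (E - 1))
      = (∑ k ∈ Finset.range N, BGF ((t + k) / N) * (exp ℚ - 1)) * (E - 1) := by
        rw [Finset.sum_mul, Finset.sum_mul]
        exact Finset.sum_congr rfl fun k _ => (mul_assoc _ _ _).symm
    _ = (∑ k ∈ Finset.range N, PowerSeries.X * (rescale (t / N) (exp ℚ) * E ^ k)) * (E - 1) := by
        congr 1
        refine Finset.sum_congr rfl fun k _ => ?_
        rw [hgen, hEk, exp_mul_exp_eq_exp_add, ← add_div]
    _ = PowerSeries.X * rescale (t / N) (exp ℚ) * ((∑ k ∈ Finset.range N, E ^ k) * (E - 1)) := by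
        rw [← Finset.mul_sum, ← Finset.mul_sum]; ring
    _ = PowerSeries.X * rescale (t / N) (exp ℚ) * (exp ℚ - 1) := by
        rw [geom_sum_mul, hEk N, div_self hN0, rescale_one, RingHom.id_apply]
    _ = (PowerSeries.C (N : ℚ) * rescale ((N : ℚ)⁻¹) (BGF t)) * ((exp ℚ - 1) * (E - 1)) := by
        have : rescale ((N : ℚ)⁻¹) (BGF t) * (E - 1)
            = PowerSeries.C ((N : ℚ)⁻¹) * PowerSeries.X * rescale (t / N) (exp ℚ) := by
          rw [hE, show (E - 1 : PowerSeries ℚ) = rescale ((N:ℚ)⁻¹) (exp ℚ - 1) by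
              rw [map_sub, map_one], ← map_mul, hgen, map_mul, rescale_X, rescale_rescale,
            div_eq_mul_inv]
        rw [mul_comm (exp ℚ - 1) (E - 1), ← mul_assoc, mul_assoc _ _ (E-1), this,
          ← mul_assoc, ← mul_assoc, ← map_mul, mul_inv_cancel₀ hN0, map_one, one_mul]

lemma mt_eval (N : ℕ) (hN : 0 < N) (m : ℕ) (t : ℚ) :
    (N : ℚ) ^ m * ∑ k ∈ Finset.range N, (Polynomial.bernoulli m).eval ((t + k) / N) =
      (N : ℚ) * (Polynomial.bernoulli m).eval t := by
  have hN0 : (N : ℚ) ≠ 0 := Nat.cast_ne_zero.mpr hN.ne'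
  have h := congrArg (PowerSeries.coeff m) (mt_series N hN t)
  simp only [map_sum, BGF, coeff_mk, PowerSeries.coeff_C_mul, coeff_rescale,
    Polynomial.aeval_def, Polynomial.eval₂_eq_eval_map, Polynomial.map_smul,
    Polynomial.eval_smul, smul_eq_mul, Algebra.algebraMap_self, Polynomial.map_id, RingHom.id_apply] at h
  have hm : ((m.factorial : ℚ)) ≠ 0 := Nat.cast_ne_zero.mpr m.factorial_ne_zero
  field_simp at h ⊢
  simp only [Finset.mul_sum, mul_div_assoc', mul_div_cancel_left₀ _ hm] at h
  rw [h, one_div, inv_pow, mul_comm (N : ℚ), mul_assoc, mul_inv_cancel_left₀ (pow_ne_zero m hN0)]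

lemma bern'_eq (n : ℕ) : bernoulli' n = (-1 : ℚ) ^ n * _root_.bernoulli n := by
  rcases eq_or_ne n 1 with rfl | hn
  · norm_num [bernoulli'_one, _root_.bernoulli_one]
  · rw [← bernoulli_eq_bernoulli'_of_ne_one hn]
    rcases Nat.even_or_odd n with he | ho
    · rw [he.neg_one_pow, one_mul]
    · rcases eq_or_ne n 0 with rfl | h0
      · simp
      · rw [_root_.bernoulli_eq_bernoulli'_of_ne_one hn,
          bernoulli'_eq_zero_of_odd ho (by omega), mul_zero]

lemma bernoulli_comp_one_sub (m : ℕ) :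
    (Polynomial.bernoulli m).comp (1 - Polynomial.X) = Polynomial.C ((-1 : ℚ) ^ m) * Polynomial.bernoulli m := by
  induction m with
  | zero => simp
  | succ m ih =>
    have hder : derivative ((Polynomial.bernoulli (m+1)).comp (1 - Polynomial.X)
        - Polynomial.C ((-1 : ℚ) ^ (m+1)) * Polynomial.bernoulli (m+1)) = 0 := by
      rw [derivative_sub, derivative_comp, derivative_bernoulli_add_one,
        derivative_C_mul, derivative_bernoulli_add_one, mul_comp, ih]
      have : ((m : ℚ[X]) + 1).comp (1 - Polynomial.X) = (m : ℚ[X]) + 1 := by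
        simp
      rw [this]
      rw [derivative_sub, Polynomial.derivative_one, Polynomial.derivative_X, zero_sub]
      rw [pow_succ]
      simp only [map_mul, map_neg, map_one, map_pow]
      ring
    have h := eq_C_of_derivative_eq_zero hder
    have h0 : ((Polynomial.bernoulli (m+1)).comp (1 - Polynomial.X)
        - Polynomial.C ((-1 : ℚ) ^ (m+1)) * Polynomial.bernoulli (m+1)).coeff 0 = 0 := by
      rw [coeff_zero_eq_eval_zero, eval_sub, eval_comp, eval_mul, eval_C]
      simp [bern'_eq]
    rw [h0, map_zero] at h
    exact sub_eq_zero.mp h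

lemma mt_poly (N : ℕ) (hN : 0 < N) (m : ℕ) :
    Polynomial.C ((N : ℚ) ^ m) * ∑ k ∈ Finset.range N,
        (Polynomial.bernoulli m).comp
          (Polynomial.C ((N : ℚ)⁻¹) * (Polynomial.X + Polynomial.C (k : ℚ))) =
      Polynomial.C (N : ℚ) * Polynomial.bernoulli m := by
  apply Polynomial.funext
  intro t
  have h := mt_eval N hN m t
  simp only [Polynomial.eval_mul, Polynomial.eval_C, Polynomial.eval_finset_sum,
    Polynomial.eval_comp, Polynomial.eval_add, Polynomial.eval_X]
  rw [← h]
  congr 1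
  refine Finset.sum_congr rfl fun k _ => ?_
  rw [div_eq_inv_mul]

lemma mt_real (N : ℕ) (hN : 0 < N) (m : ℕ) (y : ℝ) :
    (N : ℝ) ^ m * ∑ k ∈ Finset.range N,
        (Polynomial.aeval ((y + k) / N) (Polynomial.bernoulli m) : ℝ) =
      (N : ℝ) * (Polynomial.aeval y (Polynomial.bernoulli m) : ℝ) := by
  have h := congrArg (Polynomial.aeval y (R := ℚ) (A := ℝ)) (mt_poly N hN m)
  simp only [map_mul, map_sum, Polynomial.aeval_C, Polynomial.aeval_comp, map_add,
    Polynomial.aeval_X, map_pow, map_inv₀, map_natCast, eq_ratCast, Rat.cast_pow,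
    Rat.cast_natCast, Rat.cast_inv] at h
  rw [← h]
  congr 1
  refine Finset.sum_congr rfl fun k _ => ?_
  rw [div_eq_inv_mul]

lemma refl_real (m : ℕ) (x : ℝ) :
    (Polynomial.aeval (1 - x) (Polynomial.bernoulli m) : ℝ) =
      (-1 : ℝ) ^ m * (Polynomial.aeval x (Polynomial.bernoulli m) : ℝ) := by
  have h := congrArg (Polynomial.aeval x (R := ℚ) (A := ℝ)) (bernoulli_comp_one_sub m)
  simp only [Polynomial.aeval_comp, map_sub, map_one, Polynomial.aeval_X, map_mul,
    Polynomial.aeval_C, map_pow, map_neg, eq_ratCast, Rat.cast_pow, Rat.cast_neg,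
    Rat.cast_one] at h
  exact h

lemma sum_range_odd_split (h : ℕ) (f : ℕ → ℝ) :
    ∑ k ∈ Finset.range (2 * h + 1), f k
      = f 0 + ∑ j ∈ Finset.range h, (f (2 * j + 1) + f (2 * j + 2)) := by
  induction h with
  | zero => simp
  | succ h ih =>
    have e : 2 * (h + 1) + 1 = (2 * h + 1) + 1 + 1 := by ring
    rw [e, Finset.sum_range_succ, Finset.sum_range_succ, ih, Finset.sum_range_succ]
    ring

/-- For odd `N ≥ 3`, the Bernoulli polynomial `B_{2n}` is an eigenfunction of
the Perron–Frobenius operator of the multi-tent map of slope `±N` with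
eigenvalue `N^{-2n}`: summing `B_{2n}` over the `N` preimages
`y/N, (2-y)/N, (2+y)/N, ..., ((N-1)+y)/N` gives `N^{2n-1} · Σ = B_{2n}(y)`. -/
theorem bernoulli_eigenfunction_odd (N : ℕ) (hN : 3 ≤ N) (hNodd : Odd N)
    (n : ℕ) (y : ℝ) (hy : y ∈ Set.Icc (0 : ℝ) 1) :
    (N : ℝ) ^ (2 * (n : ℤ) - 1) *
        ((Polynomial.aeval (y / N) (Polynomial.bernoulli (2 * n)) : ℝ) +
          ∑ j ∈ Finset.range ((N - 1) / 2),
            ((Polynomial.aeval (((2 * (j : ℝ) + 2) - y) / N)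
                (Polynomial.bernoulli (2 * n)) : ℝ) +
              (Polynomial.aeval (((2 * (j : ℝ) + 2) + y) / N)
                (Polynomial.bernoulli (2 * n)) : ℝ))) =
      (Polynomial.aeval y (Polynomial.bernoulli (2 * n)) : ℝ) := by
  obtain ⟨h, hh⟩ := hNodd
  have hNpos : 0 < N := by omega
  have hN0 : (N : ℝ) ≠ 0 := Nat.cast_ne_zero.mpr hNpos.ne'
  have hhalf : (N - 1) / 2 = h := by omega
  set B : ℝ → ℝ := fun x => (Polynomial.aeval x (Polynomial.bernoulli (2 * n)) : ℝ) with hB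
  set f : ℕ → ℝ := fun k => B ((y + k) / N) with hf
  -- reflection of minus-terms
  have hterm : ∀ j, j < h → B ((2 * (j : ℝ) + 2 - y) / N) = f (2 * (h - 1 - j) + 1) := by
    intro j hj
    obtain ⟨d, hd⟩ : ∃ d, h = j + 1 + d := ⟨h - 1 - j, by omega⟩
    have hd2 : h - 1 - j = d := by omega
    have hrefl := refl_real (2 * n) ((y + ((2 * (h - 1 - j) + 1 : ℕ) : ℝ)) / N)
    rw [Even.neg_one_pow ⟨n, by ring⟩, one_mul] at hrefl
    show (Polynomial.aeval ((2 * (j : ℝ) + 2 - y) / N) (Polynomial.bernoulli (2 * n)) : ℝ)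
      = (Polynomial.aeval ((y + ((2 * (h - 1 - j) + 1 : ℕ) : ℝ)) / N)
          (Polynomial.bernoulli (2 * n)) : ℝ)
    rw [← hrefl]
    congr 1
    have hNr : (N : ℝ) = 2 * ((j : ℝ) + 1 + d) + 1 := by
      rw [hh, hd]; push_cast; ring
    have hc : ((2 * (h - 1 - j) + 1 : ℕ) : ℝ) = 2 * (d : ℝ) + 1 := by
      rw [hd2]; push_cast; ring
    rw [hc]
    field_simp
    rw [hNr]; ring
  have hsum2 : ∑ j ∈ Finset.range h, B ((2 * (j : ℝ) + 2 - y) / N)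
      = ∑ j ∈ Finset.range h, f (2 * j + 1) := by
    rw [Finset.sum_congr rfl fun j hj => hterm j (Finset.mem_range.mp hj)]
    exact Finset.sum_range_reflect (fun j => f (2 * j + 1)) h
  have hplus : ∀ j : ℕ, B ((2 * (j : ℝ) + 2 + y) / N) = f (2 * j + 2) := by
    intro j
    rw [hf, hB]
    congr 1
    push_cast
    ring
  have hmain := mt_real N hNpos (2 * n) y
  have hsplit := sum_range_odd_split h f
  rw [← hh] at hsplit
  have hS : B (y / N) +
      ∑ j ∈ Finset.range ((N - 1) / 2),
        (B ((2 * (j : ℝ) + 2 - y) / N) + B ((2 * (j : ℝ) + 2 + y) / N))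
      = ∑ k ∈ Finset.range N, f k := by
    rw [hhalf, Finset.sum_add_distrib, hsum2, hsplit, ← Finset.sum_add_distrib]
    refine congrArg₂ _ ?_ (Finset.sum_congr rfl fun j _ => by rw [hplus])
    show (Polynomial.aeval (y / N) (Polynomial.bernoulli (2 * n)) : ℝ)
      = (Polynomial.aeval ((y + ((0 : ℕ) : ℝ)) / N) (Polynomial.bernoulli (2 * n)) : ℝ)
    norm_num
  have hzpow : (N : ℝ) ^ (2 * (n : ℤ) - 1) = (N : ℝ) ^ (2 * n) / N := by
    rw [show (2 * (n : ℤ) - 1) = ((2 * n : ℕ) : ℤ) - 1 by push_cast; ring,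
      zpow_sub₀ hN0, zpow_natCast, zpow_one]
  rw [hzpow]
  show (N : ℝ) ^ (2 * n) / N * (B (y / N) + _) = B y
  rw [hS]
  have hfk : (∑ k ∈ Finset.range N, f k)
      = ∑ k ∈ Finset.range N,
          (Polynomial.aeval ((y + (k : ℝ)) / N) (Polynomial.bernoulli (2 * n)) : ℝ) := rfl
  rw [hfk, div_mul_eq_mul_div, div_eq_iff hN0, hmain]
  exact mul_comm _ _
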